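/- Let H and K be complex Hilbert spaces, A, B ∈ B(H) positive invertible operators with m²A ≤ B ≤ M²A for positive reals m < M, and let Φ : B(H) → B(K) be a strictly positive linear map. Then Φ(A # B)^{−1/2} Φ(B) Φ(A # B)^{−1/2} − Φ(A # B)^{1/2} Φ(A)^{−1} Φ(A # B)^{1/2} ≤ (√M − √m)² I. -/

import Mathlib

open scoped InnerProductSpace

noncomputable section

/-- The real power `A ^ r` of a (positive) operator, via the continuous functional calculus. -/
noncomputable def opPow {H : Type} [NormedAddCommGroup H] [InnerProductSpace ℂ H]
    [CompleteSpace H] (A : H →L[ℂ] H) (r : ℝ) : H →L[ℂ] H :=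
  cfc (fun t : ℝ => t ^ r) A

/-- The operator mean `A σ B = A^{1/2} f(A^{-1/2} B A^{-1/2}) A^{1/2}` associated with the
representing function `f`. -/
noncomputable def opMean {H : Type} [NormedAddCommGroup H] [InnerProductSpace ℂ H]
    [CompleteSpace H] (f : ℝ → ℝ) (A B : H →L[ℂ] H) : H →L[ℂ] H :=
  opPow A (1/2) * cfc f (opPow A (-(1/2)) * B * opPow A (-(1/2))) * opPow A (1/2)

/-- The weighted geometric mean `A #_α B = A^{1/2} (A^{-1/2} B A^{-1/2})^α A^{1/2}`. -/
noncomputable def geoMean {H : Type} [NormedAddCommGroup H] [InnerProductSpace ℂ H]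
    [CompleteSpace H] (α : ℝ) (A B : H →L[ℂ] H) : H →L[ℂ] H :=
  opMean (fun t : ℝ => t ^ α) A B

/-- `f : (0,∞) → (0,∞)` is operator monotone: for all positive invertible operators `X ≤ Y`
(on any complex Hilbert space), `f(X) ≤ f(Y)` in the Loewner order. -/
def IsOperatorMonotone (f : ℝ → ℝ) : Prop :=
  ∀ (H : Type) [NormedAddCommGroup H] [InnerProductSpace ℂ H] [CompleteSpace H]
    (X Y : H →L[ℂ] H), 0 ≤ X → IsUnit X → 0 ≤ Y → IsUnit Y → X ≤ Y →
      cfc f X ≤ cfc f Y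

section Aux

variable {E : Type} [NormedAddCommGroup E] [InnerProductSpace ℂ E] [CompleteSpace E]

lemma specPos {a : E →L[ℂ] E} (ha : 0 ≤ a) (hau : IsUnit a) : ∀ t ∈ spectrum ℝ a, 0 < t := by
  intro t ht
  rcases (spectrum_nonneg_of_nonneg ha ht).lt_or_eq with h | h
  · exact h
  · rw [← h] at ht; exact absurd hau (by rw [← spectrum.zero_notMem_iff ℝ]; simp [ht])

lemma opPow_contOn {a : E →L[ℂ] E} (ha : 0 ≤ a) (hau : IsUnit a) (r : ℝ) :
    ContinuousOn (fun t : ℝ => t ^ r) (spectrum ℝ a) :=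
  ContinuousOn.rpow_const continuousOn_id fun t ht => Or.inl (specPos ha hau t ht).ne'

lemma opPow_sa {a : E →L[ℂ] E} (ha : 0 ≤ a) (hau : IsUnit a) (r : ℝ) :
    IsSelfAdjoint (opPow a r) :=
  cfc_predicate _ a

lemma opPow_nonneg {a : E →L[ℂ] E} (ha : 0 ≤ a) (r : ℝ) : 0 ≤ opPow a r :=
  cfc_nonneg fun t ht => Real.rpow_nonneg (spectrum_nonneg_of_nonneg ha ht) r

lemma opPow_isUnit {a : E →L[ℂ] E} (ha : 0 ≤ a) (hau : IsUnit a) (r : ℝ) :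
    IsUnit (opPow a r) :=
  isUnit_cfc _ a (opPow_contOn ha hau r) (IsSelfAdjoint.of_nonneg ha)
    (fun t ht => (Real.rpow_pos_of_pos (specPos ha hau t ht) r).ne')

lemma opPow_mul_opPow {a : E →L[ℂ] E} (ha : 0 ≤ a) (hau : IsUnit a) (r s : ℝ) :
    opPow a r * opPow a s = opPow a (r + s) := by
  unfold opPow
  rw [← cfc_mul _ _ a (opPow_contOn ha hau r) (opPow_contOn ha hau s)]
  exact cfc_congr fun t ht => (Real.rpow_add (specPos ha hau t ht) r s).symm

lemma opPow_half_mul_self {a : E →L[ℂ] E} (ha : 0 ≤ a) (hau : IsUnit a) :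
    opPow a (1/2) * opPow a (1/2) = a := by
  rw [opPow_mul_opPow ha hau]
  norm_num
  unfold opPow
  calc cfc (fun t : ℝ => t ^ (1:ℝ)) a = cfc (fun t : ℝ => t) a :=
        cfc_congr fun t ht => Real.rpow_one t
    _ = a := cfc_id' ℝ a (IsSelfAdjoint.of_nonneg ha)

lemma opPow_neg_half_mul_half {a : E →L[ℂ] E} (ha : 0 ≤ a) (hau : IsUnit a) :
    opPow a (-(1/2)) * opPow a (1/2) = 1 := by
  rw [opPow_mul_opPow ha hau]
  norm_num
  unfold opPow
  calc cfc (fun t : ℝ => t ^ (0:ℝ)) a = cfc (1 : ℝ → ℝ) a :=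
        cfc_congr fun t ht => Real.rpow_zero t
    _ = 1 := cfc_one ℝ a (IsSelfAdjoint.of_nonneg ha)

lemma opPow_half_mul_neg_half {a : E →L[ℂ] E} (ha : 0 ≤ a) (hau : IsUnit a) :
    opPow a (1/2) * opPow a (-(1/2)) = 1 := by
  rw [opPow_mul_opPow ha hau]
  norm_num
  unfold opPow
  calc cfc (fun t : ℝ => t ^ (0:ℝ)) a = cfc (1 : ℝ → ℝ) a :=
        cfc_congr fun t ht => Real.rpow_zero t
    _ = 1 := cfc_one ℝ a (IsSelfAdjoint.of_nonneg ha)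

end Aux

lemma scalar_key1 {m M t : ℝ} (hm : 0 < m) (hM : m < M) (h1 : m^2 ≤ t) (h2 : t ≤ M^2) :
    t + m*M ≤ (m+M) * t ^ ((1:ℝ)/2) := by
  have ht0 : (0:ℝ) ≤ t := le_trans (by positivity) h1
  rw [← Real.sqrt_eq_rpow]
  have hs : Real.sqrt t ^ 2 = t := Real.sq_sqrt ht0
  have hs0 : 0 ≤ Real.sqrt t := Real.sqrt_nonneg t
  have hms : m ≤ Real.sqrt t := by nlinarith
  have hsM : Real.sqrt t ≤ M := by nlinarith
  nlinarith

lemma scalar_key2 {m M t : ℝ} (hm : 0 < m) (hM : m < M) (ht : 0 < t) :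
    2 * Real.sqrt (m*M) ≤ m*M*t + t⁻¹ := by
  have hg : Real.sqrt (m*M) ^ 2 = m*M := Real.sq_sqrt (by nlinarith)
  rw [← sub_nonneg]
  have he : m*M*t + t⁻¹ - 2 * Real.sqrt (m*M)
      = (m*M*t^2 + 1 - 2 * Real.sqrt (m*M) * t) / t := by
    field_simp
  rw [he]
  apply div_nonneg _ ht.le
  nlinarith [sq_nonneg (Real.sqrt (m*M) * t - 1)]


set_option maxHeartbeats 1000000 in
/-- **Operator Shisha–Mond inequality.** -/
theorem stmt_8 {H K : Type} [NormedAddCommGroup H] [InnerProductSpace ℂ H] [CompleteSpace H]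
    [NormedAddCommGroup K] [InnerProductSpace ℂ K] [CompleteSpace K]
    (A B : H →L[ℂ] H) (hA : 0 ≤ A) (hAu : IsUnit A) (hB : 0 ≤ B) (hBu : IsUnit B)
    (m M : ℝ) (hm : 0 < m) (hM : m < M)
    (h₁ : (m ^ 2) • A ≤ B) (h₂ : B ≤ (M ^ 2) • A)
    (Φ : (H →L[ℂ] H) →ₗ[ℂ] (K →L[ℂ] K))
    (hΦ : ∀ X : H →L[ℂ] H, 0 ≤ X → 0 ≤ Φ X)
    (hΦu : ∀ X : H →L[ℂ] H, 0 ≤ X → IsUnit X → IsUnit (Φ X)) :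
    opPow (Φ (geoMean (1/2) A B)) (-(1/2)) * Φ B * opPow (Φ (geoMean (1/2) A B)) (-(1/2)) -
        opPow (Φ (geoMean (1/2) A B)) (1/2) * Ring.inverse (Φ A) *
          opPow (Φ (geoMean (1/2) A B)) (1/2) ≤
      ((Real.sqrt M - Real.sqrt m) ^ 2) • (1 : K →L[ℂ] K) := by
  have hAsa : IsSelfAdjoint A := .of_nonneg hA
  set Ah := opPow A (1/2) with hAh_def
  set Ai := opPow A (-(1/2)) with hAi_def
  have hAiAh : Ai * Ah = 1 := opPow_neg_half_mul_half hA hAu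
  have hAhAi : Ah * Ai = 1 := opPow_half_mul_neg_half hA hAu
  have hAhAh : Ah * Ah = A := opPow_half_mul_self hA hAu
  have hAh_sa : IsSelfAdjoint Ah := opPow_sa hA hAu _
  have hAi_sa : IsSelfAdjoint Ai := opPow_sa hA hAu _
  have hAhu : IsUnit Ah := opPow_isUnit hA hAu _
  have hAiu : IsUnit Ai := opPow_isUnit hA hAu _
  set C := Ai * B * Ai with hC_def
  have hC_nonneg : 0 ≤ C := by
    have := star_right_conjugate_nonneg hB Ai
    rwa [hAi_sa.star_eq] at this
  have hC_unit : IsUnit C := (hAiu.mul hBu).mul hAiu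
  have hCsa : IsSelfAdjoint C := .of_nonneg hC_nonneg
  have hAiAAi : Ai * A * Ai = 1 := by
    rw [← hAhAh, show Ai * (Ah * Ah) * Ai = (Ai * Ah) * (Ah * Ai) by noncomm_ring,
      hAiAh, hAhAi, one_mul]
  -- C is between m² and M²
  have hCl : (m^2 : ℝ) • (1 : H →L[ℂ] H) ≤ C := by
    have h := star_right_conjugate_le_conjugate h₁ Ai
    rw [hAi_sa.star_eq, show Ai * ((m^2 : ℝ) • A) * Ai = (m^2 : ℝ) • (Ai * A * Ai) by
      rw [mul_smul_comm, smul_mul_assoc], hAiAAi] at h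
    exact h
  have hCu : C ≤ (M^2 : ℝ) • (1 : H →L[ℂ] H) := by
    have h := star_right_conjugate_le_conjugate h₂ Ai
    rw [hAi_sa.star_eq, show Ai * ((M^2 : ℝ) • A) * Ai = (M^2 : ℝ) • (Ai * A * Ai) by
      rw [mul_smul_comm, smul_mul_assoc], hAiAAi] at h
    exact h
  have hCspec1 : ∀ t ∈ spectrum ℝ C, m^2 ≤ t := by
    rw [← Algebra.algebraMap_eq_smul_one] at hCl
    exact (algebraMap_le_iff_le_spectrum (a := C) hCsa).mp hCl
  have hCspec2 : ∀ t ∈ spectrum ℝ C, t ≤ M^2 := by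
    rw [← Algebra.algebraMap_eq_smul_one] at hCu
    intro t ht
    exact (le_algebraMap_iff_spectrum_le (a := C) hCsa).mp hCu t ht
  -- the key operator inequality C + mM ≤ (m+M) C^{1/2}
  set Ch := cfc (fun t : ℝ => t ^ ((1:ℝ)/2)) C with hCh_def
  have hCh_eq : Ch = opPow C (1/2) := rfl
  have hCh_nonneg : 0 ≤ Ch := hCh_eq ▸ opPow_nonneg hC_nonneg _
  have hCh_unit : IsUnit Ch := hCh_eq ▸ opPow_isUnit hC_nonneg hC_unit _
  have hCh_sa : IsSelfAdjoint Ch := hCh_eq ▸ opPow_sa hC_nonneg hC_unit _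
  have hkey : C + (m*M) • (1 : H →L[ℂ] H) ≤ (m+M) • Ch := by
    have h := cfc_mono (a := C) (f := fun t : ℝ => t + m*M)
      (g := fun t : ℝ => (m+M) * t ^ ((1:ℝ)/2))
      (fun t ht => scalar_key1 hm hM (hCspec1 t ht) (hCspec2 t ht))
      (by fun_prop) (continuousOn_const.mul (opPow_contOn hC_nonneg hC_unit _))
    rwa [cfc_add C (fun t : ℝ => t) (fun _ : ℝ => m*M) (by fun_prop) (by fun_prop),
      cfc_id' ℝ C hCsa, cfc_const _ _ hCsa, Algebra.algebraMap_eq_smul_one,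
      cfc_const_mul _ _ _ (opPow_contOn hC_nonneg hC_unit _)] at h
  -- conjugate by Ah
  have hG_eq : geoMean (1/2) A B = Ah * Ch * Ah := rfl
  have mid1 : B + (m*M) • A ≤ (m+M) • (Ah * Ch * Ah) := by
    have h := star_right_conjugate_le_conjugate hkey Ah
    rw [hAh_sa.star_eq] at h
    have e1 : Ah * (C + (m*M) • (1 : H →L[ℂ] H)) * Ah = B + (m*M) • A := by
      rw [mul_add, add_mul, mul_smul_comm, smul_mul_assoc, mul_one, hAhAh, hC_def,
        show Ah * (Ai * B * Ai) * Ah = (Ah * Ai) * B * (Ai * Ah) by noncomm_ring,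
        hAhAi, hAiAh, one_mul, mul_one]
    have e2 : Ah * ((m+M) • Ch) * Ah = (m+M) • (Ah * Ch * Ah) := by
      rw [mul_smul_comm, smul_mul_assoc]
    rwa [e1, e2] at h
  have hG_nonneg : 0 ≤ geoMean (1/2) A B := by
    rw [hG_eq]
    have := star_right_conjugate_nonneg hCh_nonneg Ah
    rwa [hAh_sa.star_eq] at this
  have hG_unit : IsUnit (geoMean (1/2) A B) := by
    rw [hG_eq]; exact (hAhu.mul hCh_unit).mul hAhu
  -- push through Φ
  have hΦmono : ∀ X Y : H →L[ℂ] H, X ≤ Y → Φ X ≤ Φ Y := by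
    intro X Y h
    have := hΦ (Y - X) (sub_nonneg.2 h)
    rw [map_sub] at this
    exact sub_nonneg.1 this
  have hsmulΦ : ∀ (r : ℝ) (X : H →L[ℂ] H), Φ (r • X) = r • Φ X := fun r X =>
    Φ.map_smul_of_tower r X
  set P := Φ (geoMean (1/2) A B) with hP_def
  have mid2 : Φ B + (m*M) • Φ A ≤ (m+M) • P := by
    have h := hΦmono _ _ mid1
    rwa [map_add, hsmulΦ, hsmulΦ, ← hG_eq, ← hP_def] at h
  have hPpos : 0 ≤ P := hΦ _ hG_nonneg
  have hPu : IsUnit P := hΦu _ hG_nonneg hG_unit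
  set Q := opPow P (-(1/2)) with hQ_def
  set S := opPow P (1/2) with hS_def
  have hQS : Q * S = 1 := opPow_neg_half_mul_half hPpos hPu
  have hSQ : S * Q = 1 := opPow_half_mul_neg_half hPpos hPu
  have hSS : S * S = P := opPow_half_mul_self hPpos hPu
  have hQ_sa : IsSelfAdjoint Q := opPow_sa hPpos hPu _
  have hQu : IsUnit Q := opPow_isUnit hPpos hPu _
  have hQPQ : Q * P * Q = 1 := by
    rw [← hSS, show Q * (S * S) * Q = (Q * S) * (S * Q) by noncomm_ring, hQS, hSQ, one_mul]
  set X := Q * Φ B * Q with hX_def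
  set Y := Q * Φ A * Q with hY_def
  have h5 : X + (m*M) • Y ≤ (m+M) • (1 : K →L[ℂ] K) := by
    have h := star_right_conjugate_le_conjugate mid2 Q
    rw [hQ_sa.star_eq] at h
    have e1 : Q * (Φ B + (m*M) • Φ A) * Q = X + (m*M) • Y := by
      rw [mul_add, add_mul, mul_smul_comm, smul_mul_assoc]
    have e2 : Q * ((m+M) • P) * Q = (m+M) • (1 : K →L[ℂ] K) := by
      rw [mul_smul_comm, smul_mul_assoc, hQPQ]
    rwa [e1, e2] at h
  have hΦA_nonneg : 0 ≤ Φ A := hΦ A hA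
  have hΦAu : IsUnit (Φ A) := hΦu A hA hAu
  have hY_nonneg : 0 ≤ Y := by
    have := star_right_conjugate_nonneg hΦA_nonneg Q
    rwa [hQ_sa.star_eq] at this
  have hY_unit : IsUnit Y := (hQu.mul hΦAu).mul hQu
  have hYsa : IsSelfAdjoint Y := .of_nonneg hY_nonneg
  set Z := S * Ring.inverse (Φ A) * S with hZ_def
  have hYZ : Y * Z = 1 := by
    calc Y * Z = Q * Φ A * (Q * S) * (Ring.inverse (Φ A) * S) := by
          rw [hY_def, hZ_def]; noncomm_ring
      _ = Q * (Φ A * Ring.inverse (Φ A)) * S := by rw [hQS, mul_one]; noncomm_ring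
      _ = Q * S := by rw [Ring.mul_inverse_cancel _ hΦAu, mul_one]
      _ = 1 := hQS
  have contYinv : ContinuousOn (fun t : ℝ => t⁻¹) (spectrum ℝ Y) :=
    ContinuousOn.inv₀ continuousOn_id fun t ht => (specPos hY_nonneg hY_unit t ht).ne'
  set W := cfc (fun t : ℝ => t⁻¹) Y with hW_def
  have hWY : W * Y = 1 := by
    calc W * Y = cfc (fun t : ℝ => t⁻¹) Y * cfc (fun t : ℝ => t) Y := by
          rw [cfc_id' ℝ Y hYsa]
      _ = cfc (fun t : ℝ => t⁻¹ * t) Y := (cfc_mul _ _ Y contYinv (by fun_prop)).symm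
      _ = cfc (1 : ℝ → ℝ) Y :=
          cfc_congr fun t ht => inv_mul_cancel₀ (specPos hY_nonneg hY_unit t ht).ne'
      _ = 1 := cfc_one ℝ Y hYsa
  have hZW : Z = W := by
    calc Z = 1 * Z := (one_mul Z).symm
      _ = W * Y * Z := by rw [hWY]
      _ = W * (Y * Z) := by rw [mul_assoc]
      _ = W := by rw [hYZ, mul_one]
  have hAMGM : (2 * Real.sqrt (m*M)) • (1 : K →L[ℂ] K) ≤ (m*M) • Y + W := by
    have h := cfc_mono (a := Y) (f := fun _ : ℝ => 2 * Real.sqrt (m*M))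
      (g := fun t : ℝ => m*M*t + t⁻¹)
      (fun t ht => scalar_key2 hm hM (specPos hY_nonneg hY_unit t ht))
      (by fun_prop) ((continuousOn_const.mul continuousOn_id).add contYinv)
    rwa [cfc_const _ _ hYsa, Algebra.algebraMap_eq_smul_one,
      cfc_add Y (fun t : ℝ => m*M*t) (fun t : ℝ => t⁻¹)
        (continuousOn_const.mul continuousOn_id) contYinv,
      show (fun t : ℝ => m*M*t) = fun t : ℝ => (m*M) * t from rfl,
      cfc_const_mul _ _ _ (by fun_prop), cfc_id' ℝ Y hYsa] at h
  -- conclude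
  have h7 : X - Z ≤ (m+M) • (1 : K →L[ℂ] K) - (2 * Real.sqrt (m*M)) • (1 : K →L[ℂ] K) := by
    have e : X - Z = (X + (m*M) • Y) - ((m*M) • Y + Z) := by abel
    rw [e, hZW]
    exact sub_le_sub h5 hAMGM
  have e8 : (m+M) • (1 : K →L[ℂ] K) - (2 * Real.sqrt (m*M)) • (1 : K →L[ℂ] K)
      = ((Real.sqrt M - Real.sqrt m) ^ 2) • (1 : K →L[ℂ] K) := by
    rw [← sub_smul]
    congr 1
    have hsm : Real.sqrt m ^ 2 = m := Real.sq_sqrt hm.le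
    have hsM : Real.sqrt M ^ 2 = M := Real.sq_sqrt (hm.trans hM).le
    rw [Real.sqrt_mul hm.le]
    ring_nf
    nlinarith [Real.sqrt_nonneg m, Real.sqrt_nonneg M]
  rw [e8] at h7
  exact h7
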